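/- arXiv:2103.12483 — 2 statements merged into one kernel-verified Lean document; each statement's English description precedes it below -/
import Mathlib

section
/- Let P = [[1,0],[1,1]] over 𝔽₂ and P_n = P^{⊗n} its n-fold Kronecker power. Then the Hamming weight of row i (0-indexed) of P_n equals 2^{w(i)}, where w(i) is the number of ones in the binary expansion of i. -/
open Matrix

/-- The 2×2 polar kernel `P = [[1,0],[1,1]]` over GF(2). -/
def Pmat : Matrix (Fin 2) (Fin 2) (ZMod 2) := !![1, 0; 1, 1]

/-- The polar transform `P_n = P^{⊗n}`, the n-fold Kronecker power of `Pmat`. -/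
def polarP : (n : ℕ) → Matrix (Fin (2 ^ n)) (Fin (2 ^ n)) (ZMod 2)
  | 0 => 1
  | n + 1 =>
    Matrix.reindex (finProdFinEquiv.trans (finCongr (by ring)))
      (finProdFinEquiv.trans (finCongr (by ring)))
      (Matrix.kroneckerMap (· * ·) Pmat (polarP n))

lemma hammingNorm_comp_equiv {α ι κ : Type*} [Fintype ι] [Fintype κ] [DecidableEq α] [Zero α]
    (e : ι ≃ κ) (v : κ → α) : hammingNorm (v ∘ e) = hammingNorm v := by
  unfold hammingNorm
  exact Finset.card_equiv e (by simp)

lemma hammingNorm_mul_prod {α ι κ : Type*} [Fintype ι] [Fintype κ] [DecidableEq α]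
    [MulZeroClass α] [NoZeroDivisors α] (v : ι → α) (w : κ → α) :
    hammingNorm (fun p : ι × κ => v p.1 * w p.2) = hammingNorm v * hammingNorm w := by
  unfold hammingNorm
  rw [← Finset.card_product]
  congr 1
  ext p
  simp [mul_ne_zero_iff]

lemma digits_len_le_of_lt_pow {b n : ℕ} (hb : b < 2 ^ n) :
    (Nat.digits 2 b).length ≤ n := by
  rcases Nat.eq_zero_or_pos b with rfl | hbpos
  · simp
  · rw [Nat.digits_len 2 b one_lt_two hbpos.ne']
    have := Nat.log_lt_of_lt_pow hbpos.ne' hb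
    omega

lemma sum_digits_split {n b a : ℕ} (hb : b < 2 ^ n) (ha : a < 2) :
    (Nat.digits 2 (b + 2 ^ n * a)).sum = (Nat.digits 2 b).sum + a := by
  interval_cases a
  · simp
  · have hlen : (Nat.digits 2 b).length ≤ n := digits_len_le_of_lt_pow hb
    have h := Nat.digits_append_zeroes_append_digits (b := 2) (m := 1)
      (k := n - (Nat.digits 2 b).length) (n := b) one_lt_two one_pos
    rw [show (Nat.digits 2 b).length + (n - (Nat.digits 2 b).length) = n by omega] at h
    rw [mul_one] at h ⊢
    rw [← h]
    simp [List.sum_append]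

lemma hammingNorm_Pmat (a : Fin 2) : hammingNorm (Pmat a) = 2 ^ a.val := by
  fin_cases a <;> decide

/-- Row `i` of `P_n` has Hamming weight `2^{w(i)}`, where `w(i)` is the number of
ones in the binary expansion of `i`. -/
theorem polarP_row_weight (n : ℕ) (i : Fin (2 ^ n)) :
    hammingNorm (polarP n i) = 2 ^ ((Nat.digits 2 i.val).sum) := by
  induction n with
  | zero =>
    have h1 : i.val = 0 := Nat.lt_one_iff.mp (by simpa using i.isLt)
    rw [h1]
    simp only [Nat.digits_zero, List.sum_nil, pow_zero]
    unfold hammingNorm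
    rw [Finset.card_eq_one]
    refine ⟨i, ?_⟩
    ext j
    have hj : j = i := Fin.ext (by rw [h1]; exact Nat.lt_one_iff.mp (by simpa using j.isLt))
    simp only [polarP, hj, Finset.mem_filter, Finset.mem_univ, true_and,
      Finset.mem_singleton, Matrix.one_apply_eq, eq_self_iff_true, iff_true]
    simp [Fin.ext_iff, h1]
  | succ n ih =>
    let e : Fin 2 × Fin (2 ^ n) ≃ Fin (2 ^ (n + 1)) :=
      finProdFinEquiv.trans (finCongr (by ring))
    set p := e.symm i with hp
    have hrow : polarP (n + 1) i =
        (Matrix.kroneckerMap (· * ·) Pmat (polarP n) p) ∘ ⇑e.symm := rfl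
    have hval : i.val = p.2.val + 2 ^ n * p.1.val := by
      conv_lhs => rw [← e.apply_symm_apply i]
      rw [← hp]
      simp [e, finProdFinEquiv]
    have hkron : Matrix.kroneckerMap (· * ·) Pmat (polarP n) p =
        fun q : Fin 2 × Fin (2 ^ n) => Pmat p.1 q.1 * polarP n p.2 q.2 := rfl
    rw [hrow, hammingNorm_comp_equiv, hkron, hammingNorm_mul_prod,
      hammingNorm_Pmat, ih, hval, sum_digits_split p.2.isLt p.1.isLt, pow_add]
    ring
end

section
/- Let g₀,…,g_{N−1} be the rows of P_n over 𝔽₂ and let w_min = min_{i∈𝒜} w(g_i) for an index set 𝒜 ⊆ {0,…,N−1}. If i ∈ 𝒜 satisfies w(g_i) > w_min, then for every subset K of indices k > i, the codeword g_i ⊕ ⨁_{k∈K} g_k has Hamming weight strictly greater than w_min. -/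
open Matrix

def eqv (n : ℕ) : Fin 2 × Fin (2 ^ n) ≃ Fin (2 ^ (n+1)) :=
  finProdFinEquiv.trans (finCongr (by ring))

lemma eqv_val (n : ℕ) (a : Fin 2) (b : Fin (2 ^ n)) :
    ((eqv n (a, b)) : ℕ) = b + 2 ^ n * a := rfl

lemma polarP_succ_apply (n : ℕ) (a c : Fin 2) (b d : Fin (2 ^ n)) :
    polarP (n+1) (eqv n (a, b)) (eqv n (c, d)) = Pmat a c * polarP n b d := by
  show (Matrix.reindex (eqv n) (eqv n) (Matrix.kroneckerMap (· * ·) Pmat (polarP n))) _ _ = _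
  simp [Matrix.reindex_apply, Matrix.kroneckerMap]

def Ksplit (n : ℕ) (a : Fin 2) (K : Finset (Fin (2 ^ (n+1)))) : Finset (Fin (2 ^ n)) :=
  (K.filter fun k => ((eqv n).symm k).1 = a).image fun k => ((eqv n).symm k).2

lemma mem_Ksplit {n : ℕ} {a : Fin 2} {K : Finset (Fin (2 ^ (n+1)))} {t : Fin (2 ^ n)} :
    t ∈ Ksplit n a K ↔ eqv n (a, t) ∈ K := by
  simp only [Ksplit, Finset.mem_image, Finset.mem_filter]
  constructor
  · rintro ⟨k, ⟨hk, h1⟩, h2⟩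
    have : eqv n (a, t) = k := by
      rw [← h1, ← h2]
      exact (Equiv.apply_symm_apply _ k)
    rwa [this]
  · intro h
    exact ⟨eqv n (a, t), ⟨h, by simp⟩, by simp⟩

lemma sum_filter_eq (n : ℕ) (a : Fin 2) (K : Finset (Fin (2 ^ (n+1))))
    (g : Fin (2 ^ n) → ZMod 2) :
    ∑ k ∈ K.filter (fun k => ((eqv n).symm k).1 = a),
      g ((eqv n).symm k).2 = ∑ t ∈ Ksplit n a K, g t := by
  rw [Ksplit, Finset.sum_image]
  intro x hx y hy hxy
  simp only [Finset.mem_coe, Finset.mem_filter] at hx hy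
  have : (eqv n).symm x = (eqv n).symm y := Prod.ext (hx.2.trans hy.2.symm) hxy
  exact (eqv n).symm.injective this

lemma sum_rows_apply (n : ℕ) (K : Finset (Fin (2 ^ (n+1)))) (c : Fin 2) (d : Fin (2 ^ n)) :
    (∑ k ∈ K, polarP (n+1) k) (eqv n (c, d)) =
      Pmat 0 c * (∑ t ∈ Ksplit n 0 K, polarP n t d)
      + Pmat 1 c * (∑ t ∈ Ksplit n 1 K, polarP n t d) := by
  erw [Finset.sum_apply]
  have hrow : ∀ k ∈ K, polarP (n+1) k (eqv n (c, d))
      = Pmat ((eqv n).symm k).1 c * polarP n ((eqv n).symm k).2 d := by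
    intro k _
    conv_lhs => rw [← Equiv.apply_symm_apply (eqv n) k]
    exact polarP_succ_apply n _ c _ d
  rw [Finset.sum_congr rfl hrow]
  rw [← Finset.sum_filter_add_sum_filter_not K (fun k => ((eqv n).symm k).1 = 0)]
  congr 1
  · rw [Finset.mul_sum, ← sum_filter_eq n 0 K (fun t => Pmat 0 c * polarP n t d)]
    exact Finset.sum_congr rfl (fun k hk => by
      rw [(Finset.mem_filter.mp hk).2])
  · have : K.filter (fun k => ¬((eqv n).symm k).1 = 0)
        = K.filter (fun k => ((eqv n).symm k).1 = 1) := by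
      apply Finset.filter_congr
      intro k _
      constructor
      · intro h; omega
      · intro h; rw [h]; exact one_ne_zero
    rw [this, Finset.mul_sum, ← sum_filter_eq n 1 K (fun t => Pmat 1 c * polarP n t d)]
    exact Finset.sum_congr rfl (fun k hk => by
      rw [(Finset.mem_filter.mp hk).2])
-- hammingNorm through an equiv
lemma hn_equiv {α β M : Type*} [Fintype α] [Fintype β] [DecidableEq M] [Zero M]
    (e : α ≃ β) (f : β → M) : hammingNorm (fun x => f (e x)) = hammingNorm f := by
  unfold hammingNorm
  exact Finset.card_equiv e (by simp)

lemma hn_prod {ι M : Type*} [Fintype ι] [DecidableEq M] [Zero M]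
    (g : Fin 2 × ι → M) :
    hammingNorm g = hammingNorm (fun d => g (0, d)) + hammingNorm (fun d => g (1, d)) := by
  unfold hammingNorm
  simp only [Finset.card_filter]
  rw [Fintype.sum_prod_type, Fin.sum_univ_two]

lemma hn_triangle {ι : Type*} [Fintype ι] (u v : ι → ZMod 2) :
    hammingNorm u ≤ hammingNorm (u + v) + hammingNorm v := by
  have h1 : u - v = u + v := by ext x; exact CharTwo.sub_eq_add _ _
  calc hammingNorm u = hammingDist u 0 := (hammingDist_zero_right u).symm
    _ ≤ hammingDist u v + hammingDist v 0 := hammingDist_triangle u v 0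
    _ = hammingNorm (u + v) + hammingNorm v := by
        rw [hammingDist_eq_hammingNorm, show -u = u from by ext x; exact CharTwo.neg_eq _, hammingDist_zero_right]
lemma Pmat_a0 (a : Fin 2) : Pmat a 0 = 1 := by fin_cases a <;> decide
lemma Pmat_01 : Pmat 0 1 = 0 := by decide
lemma Pmat_11 : Pmat 1 1 = 1 := by decide

lemma Ksplit_empty (n : ℕ) (a : Fin 2) : Ksplit n a (∅ : Finset (Fin (2 ^ (n+1)))) = ∅ := by
  simp [Ksplit]

lemma decomp (n : ℕ) (a : Fin 2) (b : Fin (2 ^ n)) (K : Finset (Fin (2 ^ (n+1)))) :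
    hammingNorm (polarP (n+1) (eqv n (a, b)) + ∑ k ∈ K, polarP (n+1) k) =
      hammingNorm (polarP n b + ∑ t ∈ Ksplit n 0 K, polarP n t
        + ∑ t ∈ Ksplit n 1 K, polarP n t)
      + hammingNorm ((if a = 1 then polarP n b else 0)
        + ∑ t ∈ Ksplit n 1 K, polarP n t) := by
  rw [← hn_equiv (eqv n) (polarP (n+1) (eqv n (a, b)) + ∑ k ∈ K, polarP (n+1) k), hn_prod]
  congr 1
  · congr 1
    funext d
    rw [Pi.add_apply, sum_rows_apply, polarP_succ_apply, Pmat_a0, Pmat_a0, Pmat_a0]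
    simp only [Pi.add_apply, Finset.sum_apply]
    erw [Finset.sum_apply, Finset.sum_apply]
    ring
  · congr 1
    funext d
    rw [Pi.add_apply, sum_rows_apply, polarP_succ_apply, Pmat_01, Pmat_11]
    have h : Pmat a 1 * polarP n b d = (if a = 1 then polarP n b else 0) d := by
      obtain ha | ha : a = 0 ∨ a = 1 := by omega
      · subst ha; simp [Pmat_01]
      · subst ha; simp [Pmat_11]
    rw [h]
    simp only [Pi.add_apply, Finset.sum_apply]
    erw [Finset.sum_apply]
    ring

lemma key (n : ℕ) (i : Fin (2 ^ n)) (K : Finset (Fin (2 ^ n))) (hK : ∀ k ∈ K, i < k) :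
    hammingNorm (polarP n i) ≤ hammingNorm (polarP n i + ∑ k ∈ K, polarP n k) := by
  induction n with
  | zero =>
    have : K = ∅ := Finset.eq_empty_of_forall_notMem fun k hk => by
      have h1 : (i : ℕ) < 1 := by simpa using i.isLt
      have h2 : (k : ℕ) < 1 := by simpa using k.isLt
      have := hK k hk
      rw [Fin.lt_def] at this
      omega
    rw [this]; erw [Finset.sum_empty, add_zero]
  | succ n ih =>
    obtain ⟨⟨a, b⟩, rfl⟩ : ∃ p, eqv n p = i := ⟨(eqv n).symm i, by simp⟩
    have horder : ∀ (c : Fin 2) (t : Fin (2 ^ n)), t ∈ Ksplit n c K →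
        (b : ℕ) + 2 ^ n * (a : ℕ) < (t : ℕ) + 2 ^ n * (c : ℕ) := by
      intro c t ht
      have h := hK _ (mem_Ksplit.mp ht)
      rw [Fin.lt_def] at h
      simpa [eqv_val] using h
    have hrow : hammingNorm (polarP (n+1) (eqv n (a, b)))
        = hammingNorm (polarP n b) + hammingNorm (if a = 1 then polarP n b else 0) := by
      have h := decomp n a b ∅
      simp only [Ksplit_empty] at h
      erw [Finset.sum_empty, Finset.sum_empty] at h
      simpa using h
    rw [decomp, hrow]
    obtain ha | ha : a = 0 ∨ a = 1 := by omega
    · subst ha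
      simp only [show (0 : Fin 2) ≠ 1 from by decide, if_neg, hammingNorm_zero, add_zero,
        if_false]
      have hb : ∀ t ∈ Ksplit n 0 K, b < t := by
        intro t ht
        have := horder 0 t ht
        rw [Fin.lt_def]; simpa using this
      calc hammingNorm (polarP n b)
          ≤ hammingNorm (polarP n b + ∑ t ∈ Ksplit n 0 K, polarP n t) := ih b _ hb
        _ ≤ hammingNorm ((polarP n b + ∑ t ∈ Ksplit n 0 K, polarP n t)
              + ∑ t ∈ Ksplit n 1 K, polarP n t)
            + hammingNorm (∑ t ∈ Ksplit n 1 K, polarP n t) := hn_triangle _ _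
        _ = _ := by rw [zero_add]
    · subst ha
      have hK0 : Ksplit n 0 K = ∅ := by
        apply Finset.eq_empty_of_forall_notMem
        intro t ht
        have := horder 0 t ht
        have := t.isLt
        simp at *
        omega
      have hb : ∀ t ∈ Ksplit n 1 K, b < t := by
        intro t ht
        have := horder 1 t ht
        rw [Fin.lt_def]; omega
      have hif : (if (1 : Fin 2) = 1 then polarP n b else 0) = polarP n b := if_pos rfl
      rw [hif]
      rw [hK0]; erw [Finset.sum_empty, add_zero]
      have h1 : hammingNorm (polarP n b)
          ≤ hammingNorm (polarP n b + ∑ t ∈ Ksplit n 1 K, polarP n t) := ih b _ hb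
      omega


/-- (Corollary 1) If `i ∈ 𝒜` has row weight strictly greater than `w_min`, then
including any rows with indices `k > i` still gives weight strictly greater than
`w_min`. -/
theorem coset_weight_gt_wmin (n : ℕ) (A : Finset (Fin (2 ^ n))) (i : Fin (2 ^ n))
    (hi : i ∈ A) (wmin : ℕ)
    (hwmin : wmin = (A.image fun j => hammingNorm (polarP n j)).min'
      (Finset.Nonempty.image ⟨i, hi⟩ _))
    (hgt : wmin < hammingNorm (polarP n i))
    (K : Finset (Fin (2 ^ n))) (hK : ∀ k ∈ K, i < k) :
    wmin < hammingNorm (polarP n i + ∑ k ∈ K, polarP n k) :=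
  lt_of_lt_of_le hgt (key n i K hK)
end
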